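/- The set of three permutations {1234, 1432, 4213} (one-line notation) is a perfect separating family of K_4 with multiplicity 1; in particular PSD(K_4) ≤ 3. -/

import Mathlib

open scoped Classical

/-- `σ` separates the disjoint edges `{a,b}` and `{c,d}`. -/
def Separates {n : ℕ} (σ : Equiv.Perm (Fin n)) (a b c d : Fin n) : Prop :=
  (max (σ.symm a) (σ.symm b) < min (σ.symm c) (σ.symm d)) ∨
  (max (σ.symm c) (σ.symm d) < min (σ.symm a) (σ.symm b))

/-- `F` is a perfect separating family of `K_n` with multiplicity `lam`. -/
def IsPerfectSepFamily (n : ℕ) (F : Multiset (Equiv.Perm (Fin n))) (lam : ℕ) : Prop :=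
  ∀ a b c d : Fin n, a ≠ b → c ≠ d → a ≠ c → a ≠ d → b ≠ c → b ≠ d →
    Multiset.countP (fun σ => Separates σ a b c d) F = lam

/-- The perfect separation dimension of `K_n`: the minimum size of a perfect separating
family of `K_n`. -/
noncomputable def PSD (n : ℕ) : ℕ :=
  sInf {m | ∃ F : Multiset (Equiv.Perm (Fin n)), ∃ lam : ℕ,
    Multiset.card F = m ∧ 0 < lam ∧ IsPerfectSepFamily n F lam}

/-- one-line notation `1234`. -/
noncomputable def p1234 : Equiv.Perm (Fin 4) := Equiv.ofBijective ![0, 1, 2, 3] (by decide)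
/-- one-line notation `1432`. -/
noncomputable def p1432 : Equiv.Perm (Fin 4) := Equiv.ofBijective ![0, 3, 2, 1] (by decide)
/-- one-line notation `4213`. -/
noncomputable def p4213 : Equiv.Perm (Fin 4) := Equiv.ofBijective ![3, 1, 0, 2] (by decide)

theorem Multiset.countP_singleton' {α : Type*} (P : α → Prop) [DecidablePred P] (x : α) :
    Multiset.countP P ({x} : Multiset α) = if P x then 1 else 0 := by
  rw [← Multiset.cons_zero, Multiset.countP_cons, Multiset.countP_zero]; omega

set_option maxHeartbeats 2000000 in
theorem sep_family : IsPerfectSepFamily 4 {p1234, p1432, p4213} 1 := by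
  have H1 : ∀ x, p1234.symm x = ![0,1,2,3] x := by
    intro x; rw [Equiv.symm_apply_eq]; revert x; decide
  have H2 : ∀ x, p1432.symm x = ![0,3,2,1] x := by
    intro x; rw [Equiv.symm_apply_eq]; revert x; decide
  have H3 : ∀ x, p4213.symm x = ![2,1,3,0] x := by
    intro x; rw [Equiv.symm_apply_eq]; revert x; decide
  intro a b c d hab hcd hac had hbc hbd
  simp only [Multiset.insert_eq_cons, Multiset.countP_cons, Multiset.countP_singleton']
  simp only [Separates, H1, H2, H3]
  fin_cases a <;> fin_cases b <;> fin_cases c <;> fin_cases d <;>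
    first
    | exact absurd rfl hab | exact absurd rfl hcd | exact absurd rfl hac
    | exact absurd rfl had | exact absurd rfl hbc | exact absurd rfl hbd
    | (repeat first | rw [if_pos (by decide)] | rw [if_neg (by decide)])

theorem stmt_7 :
    IsPerfectSepFamily 4 {p1234, p1432, p4213} 1 ∧ PSD 4 ≤ 3 := by
  refine ⟨sep_family, Nat.sInf_le ?_⟩
  exact ⟨{p1234, p1432, p4213}, 1, by simp, one_pos, sep_family⟩
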